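/- Let R be a commutative Noetherian ring with total ring of fractions Q(R), integral closure R̄ of R in Q(R), and conductor 𝒞(R) = (R : R̄). Then the trace ideal of the conductor equals itself: Tr_R(𝒞(R)) = 𝒞(R). -/

import Mathlib

universe u

/-- The trace ideal of an `R`-module `M`: the ideal of `R` generated by the images of all
`R`-linear maps `M → R`. -/
noncomputable def traceIdeal (R : Type u) [CommRing R] (M : Type u)
    [AddCommGroup M] [Module R M] : Ideal R :=
  ⨆ f : M →ₗ[R] R, LinearMap.range f

/-- Let `R` be a commutative Noetherian ring with total ring of fractions `Q(R)`, integral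
closure `R̄` of `R` in `Q(R)`, and conductor `𝒞(R) = (R : R̄)`, viewed as an ideal of `R`.
Then the trace ideal of the `R`-module `𝒞(R)` equals `𝒞(R)` itself. -/

lemma trace_conductor_aux (R : Type u) [CommRing R] :
    traceIdeal R ↥(Submodule.comap (Algebra.linearMap R (Localization (nonZeroDivisors R)))
      ((1 : Submodule R (Localization (nonZeroDivisors R))) /
        (Subalgebra.toSubmodule (integralClosure R (Localization (nonZeroDivisors R)))))) =
    Submodule.comap (Algebra.linearMap R (Localization (nonZeroDivisors R)))
      ((1 : Submodule R (Localization (nonZeroDivisors R))) /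
        (Subalgebra.toSubmodule (integralClosure R (Localization (nonZeroDivisors R))))) := by
  set Q := Localization (nonZeroDivisors R) with hQ
  set C : Ideal R := Submodule.comap (Algebra.linearMap R Q)
      ((1 : Submodule R Q) / (Subalgebra.toSubmodule (integralClosure R Q))) with hC
  have hinj : Function.Injective (algebraMap R Q) :=
    IsLocalization.injective Q (le_refl (nonZeroDivisors R))
  have memC : ∀ x : R, x ∈ C ↔ ∀ t ∈ Subalgebra.toSubmodule (integralClosure R Q),
      algebraMap R Q x * t ∈ (1 : Submodule R Q) := by
    intro x
    rw [hC, Submodule.mem_comap, Submodule.mem_div_iff_forall_mul_mem]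
    rfl
  apply le_antisymm
  · refine iSup_le fun f => ?_
    rintro x ⟨c, rfl⟩
    rw [memC]
    intro t ht
    have hc := (memC c.1).mp c.2
    obtain ⟨r, hr⟩ := Submodule.mem_one.mp (hc t ht)
    have hrC : r ∈ C := by
      rw [memC]
      intro u hu
      have := hc (t * u) ((integralClosure R Q).mul_mem ht hu)
      rwa [← mul_assoc, ← hr] at this
    obtain ⟨⟨a, s⟩, hmk⟩ := IsLocalization.mk'_surjective (nonZeroDivisors R) t
    have hspec : t * algebraMap R Q s = algebraMap R Q a := by
      rw [← hmk]; exact IsLocalization.mk'_spec Q a s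
    have hrs : r * s = c.1 * a := by
      apply hinj
      rw [map_mul, map_mul, hr, mul_assoc, hspec]
    have hsmul : (s : R) • (⟨r, hrC⟩ : C) = a • c := by
      ext
      simp only [Submodule.coe_smul, smul_eq_mul]
      rw [mul_comm (s : R) r, mul_comm a c.1]
      exact hrs
    have hf : (s : R) * f ⟨r, hrC⟩ = a * f c := by
      have h1 := congrArg f hsmul
      rwa [map_smul, map_smul, smul_eq_mul, smul_eq_mul] at h1
    refine Submodule.mem_one.mpr ⟨f ⟨r, hrC⟩, ?_⟩
    have hu : IsUnit (algebraMap R Q (s : R)) := IsLocalization.map_units Q s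
    apply hu.mul_left_cancel
    rw [← map_mul, hf, map_mul, ← hspec]
    ring
  · refine le_trans (Submodule.range_subtype C).ge ?_
    exact le_iSup (fun f : ↥C →ₗ[R] R => LinearMap.range f) C.subtype

theorem trace_conductor_eq_conductor (R : Type u) [CommRing R] [IsNoetherianRing R] :
    letI Q := Localization (nonZeroDivisors R)
    letI C : Ideal R := Submodule.comap (Algebra.linearMap R Q)
      ((1 : Submodule R Q) / (Subalgebra.toSubmodule (integralClosure R Q)))
    traceIdeal R ↥C = C := by
  exact trace_conductor_aux R
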